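/- Let μ, ν be discrete probability measures on a finite set X, c : X × X → ℝ≥0, and let α = min_{(A,B)∈K(μ,ν)} |∑_{x∈A}μ_x − ∑_{y∈B}ν_y| where K(μ,ν) is the collection of pairs of subsets A, B ⊆ X with |∑_{x∈A}μ_x − ∑_{y∈B}ν_y| > 0. Then for every p ≥ 1, W^{(∞)}_c(μ,ν) ≤ W_{c^p}(μ,ν)^{1/p} / α^{1/p}, a bound uniform in p and depending only on μ, ν. -/

import Mathlib

open Finset

/-- A transportation plan between discrete measures `μ` and `ν`. -/
def IsPlan {X : Type*} [Fintype X] (μ ν : X → ℝ) (π : X → X → ℝ) : Prop :=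
  (∀ x y, 0 ≤ π x y) ∧ (∀ x, ∑ y, π x y = μ x) ∧ (∀ y, ∑ x, π x y = ν y)

/-- Total transport cost of a plan. -/
noncomputable def tcost {X : Type*} [Fintype X] (c π : X → X → ℝ) : ℝ :=
  ∑ x, ∑ y, c x y * π x y

open Classical in
/-- Support of a plan, as a finite set of pairs. -/
noncomputable def spt {X : Type*} [Fintype X] (π : X → X → ℝ) : Finset (X × X) :=
  Finset.univ.filter (fun p => π p.1 p.2 ≠ 0)

open Classical in
/-- Support of a discrete measure. -/
noncomputable def msupp {X : Type*} [Fintype X] (μ : X → ℝ) : Finset X :=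
  Finset.univ.filter (fun x => μ x ≠ 0)

/-- An optimal transportation plan. -/
def IsOptimal {X : Type*} [Fintype X] (c : X → X → ℝ) (μ ν : X → ℝ) (π : X → X → ℝ) : Prop :=
  IsPlan μ ν π ∧ ∀ π' : X → X → ℝ, IsPlan μ ν π' → tcost c π ≤ tcost c π'

/-- A trim plan: optimal with support of minimal cardinality among optimal plans. -/
def IsTrim {X : Type*} [Fintype X] (c : X → X → ℝ) (μ ν : X → ℝ) (π : X → X → ℝ) : Prop :=
  IsOptimal c μ ν π ∧
    ∀ π' : X → X → ℝ, IsOptimal c μ ν π' → (spt π).card ≤ (spt π').card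

/-- `L^∞` norm of the cost with respect to a plan: max of `c` on the support. -/
noncomputable def linf {X : Type*} [Fintype X] (c π : X → X → ℝ) : ℝ :=
  WithBot.unbotD 0 (((spt π).image (fun p => c p.1 p.2)).max)

/-- Optimal transport cost `W_c(μ,ν)`. -/
noncomputable def Wc {X : Type*} [Fintype X] (c : X → X → ℝ) (μ ν : X → ℝ) : ℝ :=
  sInf {r | ∃ π, IsPlan μ ν π ∧ tcost c π = r}

/-- Infinity-Wasserstein cost `W_c^{(∞)}(μ,ν)`. -/
noncomputable def Winf {X : Type*} [Fintype X] (c : X → X → ℝ) (μ ν : X → ℝ) : ℝ :=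
  sInf {r | ∃ π, IsPlan μ ν π ∧ linf c π = r}

/-- The deterministic plan `(Id, h)_# σ`. -/
def pushF {X : Type*} [DecidableEq X] (h : X → X) (σ : X → ℝ) : X → X → ℝ :=
  fun x y => if h x = y then σ x else 0

/-- The deterministic plan `(h, Id)_# σ`. -/
def pushB {X : Type*} [DecidableEq X] (h : X → X) (σ : X → ℝ) : X → X → ℝ :=
  fun x y => if h y = x then σ y else 0

section AuxLemmas

variable {X : Type*} [Fintype X]

lemma mem_spt {π : X → X → ℝ} {e : X × X} : e ∈ spt π ↔ π e.1 e.2 ≠ 0 := by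
  simp [spt]

lemma isPlan_prod (μ ν : X → ℝ) (hμ : ∀ x, 0 ≤ μ x) (hν : ∀ y, 0 ≤ ν y)
    (hμ1 : ∑ x, μ x = 1) (hν1 : ∑ y, ν y = 1) :
    IsPlan μ ν (fun x y => μ x * ν y) := by
  refine ⟨fun x y => mul_nonneg (hμ x) (hν y), fun x => ?_, fun y => ?_⟩
  · rw [← Finset.mul_sum, hν1, mul_one]
  · rw [← Finset.sum_mul, hμ1, one_mul]

lemma tcost_nonneg {c π : X → X → ℝ} (hc : ∀ x y, 0 ≤ c x y) (hπ : ∀ x y, 0 ≤ π x y) :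
    0 ≤ tcost c π :=
  Finset.sum_nonneg fun x _ => Finset.sum_nonneg fun y _ => mul_nonneg (hc x y) (hπ x y)

lemma tcost_perturb (c π δ : X → X → ℝ) (t : ℝ) :
    tcost c (fun x y => π x y + t * δ x y) = tcost c π + t * tcost c δ := by
  unfold tcost
  rw [Finset.mul_sum, ← Finset.sum_add_distrib]
  refine Finset.sum_congr rfl fun x _ => ?_
  rw [Finset.mul_sum, ← Finset.sum_add_distrib]
  exact Finset.sum_congr rfl fun y _ => by ring

lemma linf_nonneg {c π : X → X → ℝ} (hc : ∀ x y, 0 ≤ c x y) : 0 ≤ linf c π := by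
  unfold linf
  rcases h : ((spt π).image fun p => c p.1 p.2).max with _ | m
  · rw [h]
    exact le_refl 0
  · rw [h]
    obtain ⟨e, _, rfl⟩ := Finset.mem_image.1 (Finset.mem_of_max h)
    exact hc e.1 e.2

lemma exists_optimal (c : X → X → ℝ) (μ ν : X → ℝ) (hμ1 : ∑ x, μ x = 1)
    (hne : ∃ π0, IsPlan μ ν π0) : ∃ π, IsOptimal c μ ν π := by
  classical
  set K : Set (X → X → ℝ) := {π | IsPlan μ ν π} with hK
  have hcont : Continuous fun π : X → X → ℝ => tcost c π := by
    unfold tcost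
    exact continuous_finset_sum _ fun x _ => continuous_finset_sum _ fun y _ =>
      continuous_const.mul ((continuous_apply y).comp (continuous_apply x))
  have hKc : IsClosed K := by
    have : K = (⋂ (x : X), ⋂ (y : X), {π : X → X → ℝ | 0 ≤ π x y}) ∩
        ((⋂ (x : X), {π : X → X → ℝ | ∑ y, π x y = μ x}) ∩
         (⋂ (y : X), {π : X → X → ℝ | ∑ x, π x y = ν y})) := by
      ext π
      simp only [hK, Set.mem_setOf_eq, Set.mem_inter_iff, Set.mem_iInter, IsPlan]
    rw [this]
    refine IsClosed.inter (isClosed_iInter fun x => isClosed_iInter fun y => ?_)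
      (IsClosed.inter (isClosed_iInter fun x => ?_) (isClosed_iInter fun y => ?_))
    · exact isClosed_le continuous_const ((continuous_apply y).comp (continuous_apply x))
    · exact isClosed_eq (continuous_finset_sum _ fun y _ =>
        (continuous_apply y).comp (continuous_apply x)) continuous_const
    · exact isClosed_eq (continuous_finset_sum _ fun x _ =>
        (continuous_apply y).comp (continuous_apply x)) continuous_const
  have hbox : IsCompact (Set.univ.pi fun _ : X => Set.univ.pi fun _ : X => Set.Icc (0:ℝ) 1) :=
    isCompact_univ_pi fun _ => isCompact_univ_pi fun _ => isCompact_Icc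
  have hsub : K ⊆ Set.univ.pi fun _ : X => Set.univ.pi fun _ : X => Set.Icc (0:ℝ) 1 := by
    rintro π ⟨hnn, hrow, _⟩
    intro x _ y _
    refine ⟨hnn x y, ?_⟩
    have h1 : π x y ≤ ∑ y', π x y' :=
      Finset.single_le_sum (fun y' _ => hnn x y') (mem_univ y)
    have h2 : μ x ≤ ∑ x', μ x' := by
      refine Finset.single_le_sum (fun x' _ => ?_) (mem_univ x)
      rw [← hrow x']
      exact Finset.sum_nonneg fun y' _ => hnn x' y'
    rw [hrow x] at h1
    rw [hμ1] at h2
    linarith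
  have hKcpt : IsCompact K := hbox.of_isClosed_subset hKc hsub
  obtain ⟨π, hπK, hmin⟩ := hKcpt.exists_isMinOn hne hcont.continuousOn
  exact ⟨π, hπK, fun π' hπ' => hmin hπ'⟩

lemma exists_trim (c : X → X → ℝ) (μ ν : X → ℝ) (hne : ∃ π, IsOptimal c μ ν π) :
    ∃ π, IsTrim c μ ν π := by
  have hS : {n : ℕ | ∃ π, IsOptimal c μ ν π ∧ (spt π).card = n}.Nonempty := by
    obtain ⟨π, hπ⟩ := hne
    exact ⟨(spt π).card, π, hπ, rfl⟩
  obtain ⟨π, hπ, hcard⟩ := Nat.sInf_mem hS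
  refine ⟨π, hπ, fun π' hπ' => ?_⟩
  rw [hcard]
  exact Nat.sInf_le ⟨π', hπ', rfl⟩

lemma trim_no_circulation {c : X → X → ℝ} {μ ν : X → ℝ} {π : X → X → ℝ}
    (htrim : IsTrim c μ ν π) (δ : X → X → ℝ)
    (hrow : ∀ x, ∑ y, δ x y = 0) (hcol : ∀ y, ∑ x, δ x y = 0)
    (hsupp : ∀ x y, π x y = 0 → δ x y = 0)
    (hδne : ∃ x y, δ x y ≠ 0) : False := by
  classical
  obtain ⟨⟨hplan, hopt⟩, hmin⟩ := htrim
  obtain ⟨hnn, hrowπ, hcolπ⟩ := hplan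
  obtain ⟨x₁, y₁, hδ1⟩ := hδne
  have hπ1 : π x₁ y₁ ≠ 0 := fun h => hδ1 (hsupp _ _ h)
  have hEne : (spt π).Nonempty := ⟨(x₁, y₁), mem_spt.2 hπ1⟩
  set s := (spt π).inf' hEne (fun e => π e.1 e.2) with hs
  have hspos : 0 < s := by
    rw [hs, Finset.lt_inf'_iff]
    intro e he
    exact lt_of_le_of_ne (hnn e.1 e.2) (Ne.symm (mem_spt.1 he))
  set M := (Finset.univ : Finset (X × X)).sup' ⟨(x₁, y₁), mem_univ _⟩
      (fun e => |δ e.1 e.2|) with hM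
  have hMnn : 0 ≤ M := le_trans (abs_nonneg (δ x₁ y₁))
      (Finset.le_sup' (f := fun e : X × X => |δ e.1 e.2|) (mem_univ (x₁, y₁)))
  set ε := s / (M + 1) with hε
  have hεpos : 0 < ε := div_pos hspos (by linarith)
  have hplan_t : ∀ t : ℝ, |t| ≤ ε → IsPlan μ ν (fun x y => π x y + t * δ x y) := by
    intro t ht
    refine ⟨fun x y => ?_, fun x => ?_, fun y => ?_⟩
    · show 0 ≤ π x y + t * δ x y
      by_cases h0 : π x y = 0
      · rw [h0, hsupp x y h0, mul_zero, add_zero]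
      · have hge : s ≤ π x y :=
          Finset.inf'_le (f := fun e : X × X => π e.1 e.2) ((mem_spt (e := (x, y))).2 h0)
        have habs : |t * δ x y| ≤ ε * M := by
          rw [abs_mul]
          exact mul_le_mul ht (Finset.le_sup' (f := fun e : X × X => |δ e.1 e.2|)
            (mem_univ (x, y))) (abs_nonneg _) hεpos.le
        have hεM : ε * M ≤ s := by
          rw [hε, div_mul_eq_mul_div, div_le_iff₀ (by linarith)]
          nlinarith
        have := neg_abs_le (t * δ x y)
        linarith
    · show ∑ y, (π x y + t * δ x y) = μ x
      rw [Finset.sum_add_distrib, hrowπ, ← Finset.mul_sum, hrow, mul_zero, add_zero]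
    · show ∑ x, (π x y + t * δ x y) = ν y
      rw [Finset.sum_add_distrib, hcolπ, ← Finset.mul_sum, hcol, mul_zero, add_zero]
  have hD : tcost c δ = 0 := by
    have h1 := hopt _ (hplan_t ε (by rw [abs_of_pos hεpos]))
    have h2 := hopt _ (hplan_t (-ε) (by rw [abs_neg, abs_of_pos hεpos]))
    rw [tcost_perturb] at h1 h2
    nlinarith
  have hnegex : ∃ x y, δ x y < 0 := by
    by_contra h
    push_neg at h
    refine hδ1 ?_
    exact (Finset.sum_eq_zero_iff_of_nonneg (fun y _ => h x₁ y)).1 (hrow x₁) y₁ (mem_univ y₁)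
  obtain ⟨x₂, y₂, hneg⟩ := hnegex
  have hπ2 : π x₂ y₂ ≠ 0 := by
    intro h
    rw [hsupp _ _ h] at hneg
    exact lt_irrefl 0 hneg
  set N := (spt π).filter (fun e => δ e.1 e.2 < 0) with hN
  have hNne : N.Nonempty := ⟨(x₂, y₂), mem_filter.2 ⟨mem_spt.2 hπ2, hneg⟩⟩
  set t₀ := N.inf' hNne (fun e => π e.1 e.2 / (-δ e.1 e.2)) with ht₀
  have ht₀pos : 0 < t₀ := by
    rw [ht₀, Finset.lt_inf'_iff]
    intro e he
    have h1 := mem_filter.1 he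
    have hp : 0 < π e.1 e.2 := lt_of_le_of_ne (hnn _ _) (Ne.symm (mem_spt.1 h1.1))
    exact div_pos hp (by linarith [h1.2])
  set π' : X → X → ℝ := fun x y => π x y + t₀ * δ x y with hπ'
  have hπ'plan : IsPlan μ ν π' := by
    refine ⟨fun x y => ?_, fun x => ?_, fun y => ?_⟩
    · by_cases hd : δ x y < 0
      · have hpx : π x y ≠ 0 := by
          intro h; rw [hsupp _ _ h] at hd; exact lt_irrefl 0 hd
        have hmem : (x, y) ∈ N := mem_filter.2 ⟨(mem_spt (e := (x, y))).2 hpx, hd⟩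
        have hle : t₀ ≤ π x y / (-δ x y) :=
          Finset.inf'_le (f := fun e : X × X => π e.1 e.2 / (-δ e.1 e.2)) hmem
        rw [le_div_iff₀ (by linarith)] at hle
        simp only [hπ']
        nlinarith
      · push_neg at hd
        exact add_nonneg (hnn x y) (mul_nonneg ht₀pos.le hd)
    · rw [hπ']
      rw [Finset.sum_add_distrib, hrowπ, ← Finset.mul_sum, hrow, mul_zero, add_zero]
    · rw [hπ']
      rw [Finset.sum_add_distrib, hcolπ, ← Finset.mul_sum, hcol, mul_zero, add_zero]
  have hπ'cost : tcost c π' = tcost c π := by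
    rw [hπ', tcost_perturb, hD, mul_zero, add_zero]
  have hπ'opt : IsOptimal c μ ν π' := ⟨hπ'plan, fun π'' h => by
    rw [hπ'cost]; exact hopt π'' h⟩
  have hsub : spt π' ⊆ spt π := by
    intro e he
    rw [mem_spt] at he ⊢
    intro h
    apply he
    simp only [hπ', hsupp _ _ h, h, mul_zero, add_zero]
  obtain ⟨e₀, he₀N, he₀eq⟩ := Finset.exists_mem_eq_inf' hNne
      (fun e : X × X => π e.1 e.2 / (-δ e.1 e.2))
  have he₀filter := mem_filter.1 he₀N
  have hδe₀ : δ e₀.1 e₀.2 < 0 := he₀filter.2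
  have he₀zero : π' e₀.1 e₀.2 = 0 := by
    have : t₀ * δ e₀.1 e₀.2 = -π e₀.1 e₀.2 := by
      rw [← ht₀] at he₀eq
      rw [he₀eq]
      have hne : δ e₀.1 e₀.2 ≠ 0 := ne_of_lt hδe₀
      rw [div_mul_eq_mul_div, div_neg, mul_div_assoc, div_self hne, mul_one]
    simp only [hπ']
    rw [this]
    ring
  have he₀notin : e₀ ∉ spt π' := by
    rw [mem_spt]
    simp [he₀zero]
  have hss : spt π' ⊂ spt π :=
    (Finset.ssubset_iff_of_subset hsub).2 ⟨e₀, he₀filter.1, he₀notin⟩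
  have hlt := Finset.card_lt_card hss
  have hge := hmin π' hπ'opt
  omega

lemma trim_entry_ge {c : X → X → ℝ} {μ ν : X → ℝ} {π : X → X → ℝ}
    (htrim : IsTrim c μ ν π) (α : ℝ)
    (hαle : ∀ A B : Finset X, 0 < ∑ x ∈ A, μ x - ∑ y ∈ B, ν y →
      α ≤ ∑ x ∈ A, μ x - ∑ y ∈ B, ν y)
    {x₀ y₀ : X} (h₀ : π x₀ y₀ ≠ 0) : α ≤ π x₀ y₀ := by
  classical
  obtain ⟨⟨⟨hnn, hrowπ, hcolπ⟩, hopt⟩, hmin⟩ := id htrim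
  set R : X → X → Prop := fun x x' => ∃ y, π x y ≠ 0 ∧ π x' y ≠ 0 ∧
    (x, y) ≠ (x₀, y₀) ∧ (x', y) ≠ (x₀, y₀) with hR
  set A : Finset X := univ.filter (fun x => Relation.ReflTransGen R x₀ x) with hA
  set B : Finset X := univ.filter
    (fun y => ∃ x ∈ A, π x y ≠ 0 ∧ (x, y) ≠ (x₀, y₀)) with hB
  have hx₀A : x₀ ∈ A := mem_filter.2 ⟨mem_univ _, Relation.ReflTransGen.refl⟩
  by_cases hy₀ : y₀ ∈ B
  · -- cycle case: build a circulation, contradiction with trimness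
    exfalso
    have hchain : ∀ x, Relation.ReflTransGen R x₀ x →
        ∃ n, ∃ a : ℕ → X, a 0 = x₀ ∧ (∀ i < n, R (a i) (a (i + 1))) ∧ a n = x := by
      intro x h
      induction h with
      | refl => exact ⟨0, fun _ => x₀, rfl, fun i hi => absurd hi (Nat.not_lt_zero i), rfl⟩
      | @tail b c hab hbc ih =>
        obtain ⟨n, a, h0, hstep, hlast⟩ := ih
        refine ⟨n + 1, fun i => if i ≤ n then a i else c, by simp [h0], ?_, by simp⟩
        intro i hi
        rcases Nat.lt_or_ge i n with h | h
        · have h1 : i ≤ n := h.le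
          have h2 : i + 1 ≤ n := h
          simp only [if_pos h1, if_pos h2]
          exact hstep i h
        · have hieq : i = n := by omega
          subst hieq
          simp only [le_refl, if_pos, if_neg (by omega : ¬ i + 1 ≤ i)]
          rw [hlast]
          exact hbc
    obtain ⟨x₁, hx₁A', hx₁π, hx₁ne⟩ := (mem_filter.1 hy₀).2
    have hx₁R : Relation.ReflTransGen R x₀ x₁ := (mem_filter.1 hx₁A').2
    have hP : ∃ n, ∃ a : ℕ → X, a 0 = x₀ ∧ (∀ i < n, R (a i) (a (i + 1))) ∧
        π (a n) y₀ ≠ 0 ∧ (a n, y₀) ≠ (x₀, y₀) := by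
      obtain ⟨n, a, h0, hstep, hlast⟩ := hchain x₁ hx₁R
      exact ⟨n, a, h0, hstep, by rw [hlast]; exact hx₁π, by rw [hlast]; exact hx₁ne⟩
    set n₀ := Nat.find hP with hn₀
    obtain ⟨a, ha0, hstep, haE, haNe⟩ := Nat.find_spec hP
    have hwex : ∀ i, i < n₀ → ∃ y, π (a i) y ≠ 0 ∧ π (a (i + 1)) y ≠ 0 ∧
        (a i, y) ≠ (x₀, y₀) ∧ (a (i + 1), y) ≠ (x₀, y₀) := fun i hi => hstep i hi
    set w : ℕ → X := fun i => if h : i < n₀ then (hwex i h).choose else x₀ with hwdef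
    have hw : ∀ i, (hi : i < n₀) → π (a i) (w i) ≠ 0 ∧ π (a (i + 1)) (w i) ≠ 0 ∧
        (a i, w i) ≠ (x₀, y₀) ∧ (a (i + 1), w i) ≠ (x₀, y₀) := by
      intro i hi
      simp only [hwdef, dif_pos hi]
      exact (hwex i hi).choose_spec
    have hwne : ∀ i, i < n₀ → w i ≠ y₀ := by
      intro i hi heq
      refine Nat.find_min hP hi ⟨a, ha0, fun j hj => hstep j (by omega), ?_, ?_⟩
      · simpa [heq] using (hw i hi).1
      · simpa [heq] using (hw i hi).2.2.1
    set δ : X → X → ℝ := fun x y =>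
      (if x = x₀ ∧ y = y₀ then 1 else 0) - (if x = a n₀ ∧ y = y₀ then 1 else 0)
      + ∑ i ∈ Finset.range n₀,
          ((if x = a (i + 1) ∧ y = w i then 1 else 0) -
           (if x = a i ∧ y = w i then 1 else 0)) with hδ
    have key1 : ∀ (u v x : X), ∑ y, (if x = u ∧ y = v then (1:ℝ) else 0)
        = if x = u then 1 else 0 := by
      intro u v x
      by_cases h : x = u <;> simp [h]
    have key2 : ∀ (u v y : X), ∑ x, (if x = u ∧ y = v then (1:ℝ) else 0)
        = if y = v then 1 else 0 := by
      intro u v y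
      by_cases h : y = v <;> simp [h]
    have hrowδ : ∀ x, ∑ y, δ x y = 0 := by
      intro x
      simp only [hδ]
      rw [Finset.sum_add_distrib, Finset.sum_sub_distrib, key1, key1, Finset.sum_comm]
      have hcongr : ∀ i ∈ Finset.range n₀,
          (∑ y, ((if x = a (i + 1) ∧ y = w i then (1:ℝ) else 0) -
            (if x = a i ∧ y = w i then 1 else 0)))
          = (if x = a (i + 1) then (1:ℝ) else 0) - (if x = a i then 1 else 0) := by
        intro i _
        rw [Finset.sum_sub_distrib, key1, key1]
      rw [Finset.sum_congr rfl hcongr,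
        Finset.sum_range_sub (fun i => if x = a i then (1:ℝ) else 0), ha0]
      ring
    have hcolδ : ∀ y, ∑ x, δ x y = 0 := by
      intro y
      simp only [hδ]
      rw [Finset.sum_add_distrib, Finset.sum_sub_distrib, key2, key2, Finset.sum_comm]
      have hcongr : ∀ i ∈ Finset.range n₀,
          (∑ x, ((if x = a (i + 1) ∧ y = w i then (1:ℝ) else 0) -
            (if x = a i ∧ y = w i then 1 else 0))) = 0 := by
        intro i _
        rw [Finset.sum_sub_distrib, key2, key2, sub_self]
      rw [Finset.sum_congr rfl hcongr, Finset.sum_const, smul_zero]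
      ring
    have hsuppδ : ∀ x y, π x y = 0 → δ x y = 0 := by
      intro x y hxy
      have h1 : ¬(x = x₀ ∧ y = y₀) := by rintro ⟨rfl, rfl⟩; exact h₀ hxy
      have h2 : ¬(x = a n₀ ∧ y = y₀) := by rintro ⟨rfl, rfl⟩; exact haE hxy
      simp only [hδ]
      rw [if_neg h1, if_neg h2, Finset.sum_eq_zero, add_zero, sub_self]
      intro i hi
      rw [Finset.mem_range] at hi
      have h3 : ¬(x = a (i + 1) ∧ y = w i) := by rintro ⟨rfl, rfl⟩; exact (hw i hi).2.1 hxy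
      have h4 : ¬(x = a i ∧ y = w i) := by rintro ⟨rfl, rfl⟩; exact (hw i hi).1 hxy
      rw [if_neg h3, if_neg h4, sub_self]
    have hδx₀ : δ x₀ y₀ = 1 := by
      have h2 : ¬(x₀ = a n₀ ∧ y₀ = y₀) := by
        rintro ⟨h, -⟩
        exact haNe (by rw [← h])
      have hx : ¬(x₀ = a n₀ ∧ True) := fun h => h2 ⟨h.1, rfl⟩
      simp only [hδ]
      rw [if_neg hx, sub_zero, Finset.sum_eq_zero, add_zero]
      · norm_num
      · intro i hi
        rw [Finset.mem_range] at hi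
        have h3 : ¬(x₀ = a (i + 1) ∧ y₀ = w i) := by
          rintro ⟨-, h⟩; exact hwne i hi h.symm
        have h4 : ¬(x₀ = a i ∧ y₀ = w i) := by
          rintro ⟨-, h⟩; exact hwne i hi h.symm
        rw [if_neg h3, if_neg h4, sub_self]
    exact trim_no_circulation htrim δ hrowδ hcolδ hsuppδ
      ⟨x₀, y₀, by rw [hδx₀]; norm_num⟩
  · -- cut case: the entry equals a difference of marginal masses
    have hAcompl : ∀ x y, x ∈ A → y ∉ B → (x, y) ≠ (x₀, y₀) → π x y = 0 := by
      intro x y hxA hyB hne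
      by_contra h
      exact hyB (mem_filter.2 ⟨mem_univ _, ⟨x, hxA, h, hne⟩⟩)
    have h2 : ∑ x ∈ A, ∑ y ∈ Bᶜ, π x y = π x₀ y₀ := by
      rw [← Finset.sum_product']
      refine Finset.sum_eq_single_of_mem (x₀, y₀)
        (Finset.mk_mem_product hx₀A (Finset.mem_compl.2 hy₀)) ?_
      rintro ⟨x, y⟩ hmem hne
      rw [Finset.mem_product, Finset.mem_compl] at hmem
      exact hAcompl x y hmem.1 hmem.2 hne
    have hAsum : ∑ x ∈ A, μ x = (∑ x ∈ A, ∑ y ∈ B, π x y) + π x₀ y₀ := by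
      have hstep : ∀ x ∈ A, μ x = ∑ y ∈ B, π x y + ∑ y ∈ Bᶜ, π x y := by
        intro x _
        rw [Finset.sum_add_sum_compl, hrowπ]
      rw [Finset.sum_congr rfl hstep, Finset.sum_add_distrib, h2]
    have hBsum : ∑ y ∈ B, ν y = ∑ x ∈ A, ∑ y ∈ B, π x y := by
      have hstep : ∀ y ∈ B, ν y = ∑ x ∈ A, π x y := by
        intro y hy
        rw [← hcolπ y]
        refine (Finset.sum_subset (Finset.subset_univ A) ?_).symm
        intro x _ hxA
        by_contra hπ
        obtain ⟨x', hx'A, hx'π, hx'ne⟩ := (mem_filter.1 hy).2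
        have hyne : y ≠ y₀ := fun h => hy₀ (h ▸ hy)
        have hne : (x, y) ≠ (x₀, y₀) := fun h => hyne (congrArg Prod.snd h)
        have hRx : Relation.ReflTransGen R x₀ x :=
          Relation.ReflTransGen.tail (mem_filter.1 hx'A).2 ⟨y, hx'π, hπ, hx'ne, hne⟩
        exact hxA (mem_filter.2 ⟨mem_univ _, hRx⟩)
      rw [Finset.sum_congr rfl hstep, Finset.sum_comm]
    have hd : π x₀ y₀ = ∑ x ∈ A, μ x - ∑ y ∈ B, ν y := by
      rw [hAsum, hBsum]; ring
    have hpos : 0 < ∑ x ∈ A, μ x - ∑ y ∈ B, ν y := by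
      rw [← hd]
      exact lt_of_le_of_ne (hnn x₀ y₀) (Ne.symm h₀)
    rw [hd]
    exact hαle A B hpos

end AuxLemmas

/-- uniform bound `W^{(∞)}_c(μ,ν) ≤ W_{c^p}(μ,ν)^{1/p} / α^{1/p}` for all
`p ≥ 1`, where `α` depends only on `μ` and `ν`. -/
theorem Winf_le_Wcp_div_alpha_uniform {X : Type*} [Fintype X]
    (μ ν : X → ℝ) (c : X → X → ℝ)
    (hμpos : ∀ x, 0 < μ x) (hνpos : ∀ y, 0 < ν y)
    (hμ1 : ∑ x, μ x = 1) (hν1 : ∑ y, ν y = 1)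
    (hc : ∀ x y, 0 ≤ c x y)
    (α : ℝ)
    (hα : α = sInf {r | ∃ A B : Finset X,
      r = |∑ x ∈ A, μ x - ∑ y ∈ B, ν y| ∧ 0 < r})
    (hαpos : 0 < α) :
    ∀ p : ℝ, 1 ≤ p →
      Winf c μ ν ≤ (Wc (fun x y => c x y ^ p) μ ν) ^ (1 / p) / α ^ (1 / p) := by
  intro p hp
  classical
  have hp0 : (0:ℝ) < p := lt_of_lt_of_le one_pos hp
  set c' : X → X → ℝ := fun x y => c x y ^ p with hc'
  have hc'nn : ∀ x y, 0 ≤ c' x y := fun x y => Real.rpow_nonneg (hc x y) p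
  have hplans : ∃ π0, IsPlan μ ν π0 :=
    ⟨_, isPlan_prod μ ν (fun x => (hμpos x).le) (fun y => (hνpos y).le) hμ1 hν1⟩
  obtain ⟨π, htrim⟩ := exists_trim c' μ ν (exists_optimal c' μ ν hμ1 hplans)
  obtain ⟨⟨hplan, hoptπ⟩, hminπ⟩ := id htrim
  obtain ⟨hnn, hrowπ, hcolπ⟩ := id hplan
  set T := tcost c' π with hT
  have hTnn : 0 ≤ T := tcost_nonneg hc'nn hnn
  have hWc : Wc c' μ ν = T := by
    unfold Wc
    apply le_antisymm
    · refine csInf_le ⟨0, ?_⟩ ⟨π, hplan, rfl⟩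
      rintro r ⟨π', hπ', rfl⟩
      exact tcost_nonneg hc'nn hπ'.1
    · refine le_csInf ⟨T, π, hplan, rfl⟩ ?_
      rintro r ⟨π', hπ', rfl⟩
      exact hoptπ π' hπ'
  have hαle : ∀ A B : Finset X, 0 < ∑ x ∈ A, μ x - ∑ y ∈ B, ν y →
      α ≤ ∑ x ∈ A, μ x - ∑ y ∈ B, ν y := by
    intro A B hd
    rw [hα]
    refine csInf_le ⟨0, ?_⟩ ⟨A, B, (abs_of_pos hd).symm, hd⟩
    rintro r ⟨A', B', hr, hrpos⟩
    exact hrpos.le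
  have hedge : ∀ e ∈ spt π, c e.1 e.2 ≤ (T / α) ^ (1 / p) := by
    intro e he
    have hπe : π e.1 e.2 ≠ 0 := mem_spt.1 he
    have hπα : α ≤ π e.1 e.2 := trim_entry_ge htrim α hαle hπe
    have hterm : c' e.1 e.2 * π e.1 e.2 ≤ T := by
      calc c' e.1 e.2 * π e.1 e.2 ≤ ∑ y, c' e.1 y * π e.1 y :=
            Finset.single_le_sum (f := fun y => c' e.1 y * π e.1 y)
              (fun y _ => mul_nonneg (hc'nn _ _) (hnn _ _)) (mem_univ e.2)
        _ ≤ ∑ x, ∑ y, c' x y * π x y :=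
            Finset.single_le_sum (f := fun x => ∑ y, c' x y * π x y)
              (fun x _ => Finset.sum_nonneg fun y _ =>
                mul_nonneg (hc'nn _ _) (hnn _ _)) (mem_univ e.1)
        _ = T := rfl
    have hc'le : c' e.1 e.2 ≤ T / α := by
      rw [le_div_iff₀ hαpos]
      calc c' e.1 e.2 * α ≤ c' e.1 e.2 * π e.1 e.2 :=
            mul_le_mul_of_nonneg_left hπα (hc'nn _ _)
        _ ≤ T := hterm
    have hrw : (c' e.1 e.2) ^ (1 / p) = c e.1 e.2 := by
      show ((c e.1 e.2 ^ p) ^ (1 / p)) = c e.1 e.2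
      rw [← Real.rpow_mul (hc _ _), mul_one_div_cancel hp0.ne', Real.rpow_one]
    rw [← hrw]
    exact Real.rpow_le_rpow (hc'nn _ _) hc'le (by positivity)
  have hlinf : linf c π ≤ (T / α) ^ (1 / p) := by
    unfold linf
    rcases h : ((spt π).image fun e => c e.1 e.2).max with _ | m
    · rw [h]
      exact Real.rpow_nonneg (div_nonneg hTnn hαpos.le) _
    · rw [h]
      obtain ⟨e, he, rfl⟩ := Finset.mem_image.1 (Finset.mem_of_max h)
      exact hedge e he
  have hWinf : Winf c μ ν ≤ linf c π := by
    unfold Winf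
    refine csInf_le ⟨0, ?_⟩ ⟨π, hplan, rfl⟩
    rintro r ⟨π', hπ', rfl⟩
    exact linf_nonneg hc
  calc Winf c μ ν ≤ linf c π := hWinf
    _ ≤ (T / α) ^ (1 / p) := hlinf
    _ = T ^ (1 / p) / α ^ (1 / p) := Real.div_rpow hTnn hαpos.le _
    _ = (Wc c' μ ν) ^ (1 / p) / α ^ (1 / p) := by rw [hWc]
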